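/- For every odd prime p, there exists an MDS (8,7)_{2p}-symbol-pair code: a code C over an alphabet of size 2p, of length 8, with minimum pair-distance 7 between distinct codewords and size (2p)³. -/

import Mathlib

/-- The (cyclic) pair-distance between two vectors of length `n`,
with coordinates indexed by `ZMod n`. -/
noncomputable def pairDist {n : ℕ} {σ : Type*} (u v : ZMod n → σ) : ℕ :=
  {i : ZMod n | (u i, u (i + 1)) ≠ (v i, v (i + 1))}.ncard

/-- The Hamming distance between two vectors of length `n`,
with coordinates indexed by `ZMod n`. -/
noncomputable def hamDist {n : ℕ} {σ : Type*} (u v : ZMod n → σ) : ℕ :=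
  {i : ZMod n | u i ≠ v i}.ncard

def cA (p : ℕ) : ℕ → ZMod p
  | 0 => 2 | 1 => 1 | 2 => -2 | 3 => 1 | 4 => 0 | 5 => 0 | 6 => 2 | _ => -2
def cB (p : ℕ) : ℕ → ZMod p
  | 0 => 0 | 1 => 0 | 2 => -2 | 3 => -1 | 4 => 2 | 5 => 1 | 6 => -1 | _ => 1
def cC (p : ℕ) : ℕ → ZMod p
  | 0 => -2 | 1 => -2 | 2 => 0 | 3 => -2 | 4 => 0 | 5 => -1 | 6 => 2 | _ => 2

/-- p-ary component code: row space of an integer matrix. -/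
def phip (p : ℕ) (d : Fin 3 → ZMod p) (k : ZMod 8) : ZMod p :=
  d 0 * cA p k.val + d 1 * cB p k.val + d 2 * cC p k.val

def rA : ℕ → ZMod 2
  | 0 => 0 | 1 => 1 | 2 => 1 | 3 => 1 | 4 => 0 | 5 => 0 | 6 => 1 | _ => 0
def rB : ℕ → ZMod 2
  | 0 => 1 | 1 => 1 | 2 => 0 | 3 => 1 | 4 => 0 | 5 => 1 | 6 => 0 | _ => 0
def rC : ℕ → ZMod 2
  | 0 => 1 | 1 => 1 | 2 => 1 | 3 => 0 | 4 => 1 | 5 => 0 | 6 => 0 | _ => 1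

/-- binary component code. -/
def psib (e : Fin 3 → ZMod 2) (k : ZMod 8) : ZMod 2 :=
  e 0 * rA k.val + e 1 * rB k.val + e 2 * rC k.val

/-- the correction vector α = e₀. -/
def alp (p : ℕ) (k : ZMod 8) : ZMod p :=
  match k.val with | 0 => 1 | _ => 0

def eps (p : ℕ) (z : ZMod 2) : ZMod p := if z = 0 then 0 else 1

/-- the encoder. -/
def Fenc (p : ℕ) (a : (Fin 3 → ZMod 2) × (Fin 3 → ZMod p)) (k : ZMod 8) :
    ZMod 2 × ZMod p :=
  (psib a.1 k, phip p a.2 k + eps p (a.1 0) * alp p k)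

lemma zmod8cases : ∀ z : ZMod 8, z = 0 ∨ z = 1 ∨ z = 2 ∨ z = 3 ∨ z = 4 ∨ z = 5 ∨ z = 6 ∨ z = 7 := by
  decide

lemma zmod2cases : ∀ z : ZMod 2, z = 0 ∨ z = 1 := by decide

lemma Lb : ∀ e : Fin 3 → ZMod 2, e ≠ 0 → e 0 = 0 → ∀ i j : ZMod 8,
    (psib e i = 0 ∧ psib e (i+1) = 0 ∧ psib e j = 0 ∧ psib e (j+1) = 0) → i = j := by decide

lemma Lb' : ∀ e : Fin 3 → ZMod 2, e 0 = 1 → e ≠ ![1,0,0] → ∀ i j : ZMod 8, i ≠ j →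
    (psib e i = 0 ∧ psib e (i+1) = 0 ∧ psib e j = 0 ∧ psib e (j+1) = 0) → False := by decide

lemma Lb'' : ∀ i j : ZMod 8, i ≠ j →
    (psib ![1,0,0] i = 0 ∧ psib ![1,0,0] (i+1) = 0 ∧ psib ![1,0,0] j = 0 ∧ psib ![1,0,0] (j+1) = 0) →
    (i = 4 ∧ j = 7) ∨ (i = 7 ∧ j = 4) := by decide

lemma Linjb : ∀ e : Fin 3 → ZMod 2, (∀ k, psib e k = 0) → e = 0 := by decide

lemma psib_sub (t t' : Fin 3 → ZMod 2) (k : ZMod 8) :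
    psib t k - psib t' k = psib (t - t') k := by
  simp only [psib, Pi.sub_apply]; ring

lemma phip_sub (p : ℕ) (x x' : Fin 3 → ZMod p) (k : ZMod 8) :
    phip p x k - phip p x' k = phip p (x - x') k := by
  simp only [phip, Pi.sub_apply]; ring

/-- Cramer's rule elimination. -/
lemma tri {p : ℕ} (x0 x1 x2 a b c d e f g h i D : ZMod p)
    (e1 : x0*a + x1*b + x2*c = 0) (e2 : x0*d + x1*e + x2*f = 0)
    (e3 : x0*g + x1*h + x2*i = 0)
    (hD : a*(e*i - f*h) - b*(d*i - f*g) + c*(d*h - e*g) = D) (hU : IsUnit D) :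
    x0 = 0 ∧ x1 = 0 ∧ x2 = 0 := by
  subst hD
  refine ⟨(hU.mul_left_eq_zero).mp ?_, (hU.mul_left_eq_zero).mp ?_,
    (hU.mul_left_eq_zero).mp ?_⟩
  · linear_combination (e*i - f*h)*e1 - (b*i - c*h)*e2 + (b*f - c*e)*e3
  · linear_combination (-(d*i - f*g))*e1 + (a*i - c*g)*e2 - (a*f - c*d)*e3
  · linear_combination (d*h - e*g)*e1 - (a*h - b*g)*e2 + (a*e - b*d)*e3


lemma mainlem (p : ℕ) (hp : p.Prime) (hodd : Odd p)
    (e : Fin 3 → ZMod 2) (d : Fin 3 → ZMod p) (s : ZMod p)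
    (hcase : (e = 0 ∧ s = 0 ∧ ¬(d 0 = 0 ∧ d 1 = 0 ∧ d 2 = 0)) ∨
      (e ≠ 0 ∧ e 0 = 0) ∨ (e 0 = 1 ∧ (s = 1 ∨ s = -1)))
    (i j : ZMod 8)
    (hbi : psib e i = 0) (hpi : phip p d i + s * alp p i = 0)
    (hbi1 : psib e (i+1) = 0) (hpi1 : phip p d (i+1) + s * alp p (i+1) = 0)
    (hbj : psib e j = 0) (hpj : phip p d j + s * alp p j = 0)
    (hbj1 : psib e (j+1) = 0) (hpj1 : phip p d (j+1) + s * alp p (j+1) = 0) :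
    i = j := by
  have hp2 : p ≠ 2 := by rintro rfl; exact (by decide : ¬ Odd 2) hodd
  haveI : Fact p.Prime := ⟨hp⟩
  have two_ne : (2 : ZMod p) ≠ 0 := by
    intro h
    have h2 : ((2:ℕ) : ZMod p) = 0 := by exact_mod_cast h
    have := (ZMod.natCast_eq_zero_iff 2 p).mp h2
    have := (Nat.prime_dvd_prime_iff_eq hp Nat.prime_two).mp this
    exact hp2 this
  have hu1 : IsUnit (1 : ZMod p) := isUnit_one
  have hu2 : IsUnit (2 : ZMod p) := isUnit_iff_ne_zero.mpr two_ne
  have hu4 : IsUnit (4 : ZMod p) := by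
    have h := hu2.mul hu2; norm_num at h; exact isUnit_iff_ne_zero.mpr h
  have hu8 : IsUnit (8 : ZMod p) := by
    have h := (hu2.mul hu2).mul hu2; norm_num at h
    exact isUnit_iff_ne_zero.mpr h
  rcases hcase with ⟨he, hs, hd⟩ | ⟨hne, he0⟩ | ⟨he0, hs⟩
  · -- same binary coset: p-ary argument
    subst hs
    have Hi : phip p d i = 0 := by linear_combination hpi
    have Hi1 : phip p d (i+1) = 0 := by linear_combination hpi1
    have Hj : phip p d j = 0 := by linear_combination hpj
    have Hj1 : phip p d (j+1) = 0 := by linear_combination hpj1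
    clear hpi hpi1 hpj hpj1 hbi hbi1 hbj hbj1

    rcases zmod8cases i with rfl|rfl|rfl|rfl|rfl|rfl|rfl|rfl <;>
        rcases zmod8cases j with rfl|rfl|rfl|rfl|rfl|rfl|rfl|rfl
    · rfl
    · exact absurd (tri (d 0) (d 1) (d 2) 2 0 (-2) 1 0 (-2) (-2) (-2) 0 (-4) Hi Hi1 Hj1 (by norm_num) hu4.neg) hd
    · exact absurd (tri (d 0) (d 1) (d 2) 2 0 (-2) 1 0 (-2) 1 (-1) (-2) (-2) Hi Hi1 Hj1 (by norm_num) hu2.neg) hd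
    · exact absurd (tri (d 0) (d 1) (d 2) 2 0 (-2) 1 0 (-2) 1 (-1) (-2) (-2) Hi Hi1 Hj (by norm_num) hu2.neg) hd
    · exact absurd (tri (d 0) (d 1) (d 2) 2 0 (-2) 1 0 (-2) 0 1 (-1) 2 Hi Hi1 Hj1 (by norm_num) hu2) hd
    · exact absurd (tri (d 0) (d 1) (d 2) 2 0 (-2) 1 0 (-2) 0 1 (-1) 2 Hi Hi1 Hj (by norm_num) hu2) hd
    · exact absurd (tri (d 0) (d 1) (d 2) 2 0 (-2) 1 0 (-2) 2 (-1) 2 (-2) Hi Hi1 Hj (by norm_num) hu2.neg) hd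
    · exact absurd (tri (d 0) (d 1) (d 2) 2 0 (-2) 1 0 (-2) (-2) 1 2 2 Hi Hi1 Hj (by norm_num) hu2) hd
    · exact absurd (tri (d 0) (d 1) (d 2) 1 0 (-2) (-2) (-2) 0 2 0 (-2) (-4) Hi Hi1 Hj (by norm_num) hu4.neg) hd
    · rfl
    · exact absurd (tri (d 0) (d 1) (d 2) 1 0 (-2) (-2) (-2) 0 1 (-1) (-2) (-4) Hi Hi1 Hj1 (by norm_num) hu4.neg) hd
    · exact absurd (tri (d 0) (d 1) (d 2) 1 0 (-2) (-2) (-2) 0 1 (-1) (-2) (-4) Hi Hi1 Hj (by norm_num) hu4.neg) hd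
    · exact absurd (tri (d 0) (d 1) (d 2) 1 0 (-2) 0 2 0 0 1 (-1) (-2) Hi Hj Hj1 (by norm_num) hu2.neg) hd
    · exact absurd (tri (d 0) (d 1) (d 2) (-2) (-2) 0 0 1 (-1) 2 (-1) 2 2 Hi1 Hj Hj1 (by norm_num) hu2) hd
    · exact absurd (tri (d 0) (d 1) (d 2) 1 0 (-2) 2 (-1) 2 (-2) 1 2 (-4) Hi Hj Hj1 (by norm_num) hu4.neg) hd
    · exact absurd (tri (d 0) (d 1) (d 2) 1 0 (-2) (-2) 1 2 2 0 (-2) 2 Hi Hj Hj1 (by norm_num) hu2) hd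
    · exact absurd (tri (d 0) (d 1) (d 2) 1 (-1) (-2) 2 0 (-2) 1 0 (-2) (-2) Hi1 Hj Hj1 (by norm_num) hu2.neg) hd
    · exact absurd (tri (d 0) (d 1) (d 2) (-2) (-2) 0 1 (-1) (-2) 1 0 (-2) (-4) Hi Hi1 Hj (by norm_num) hu4.neg) hd
    · rfl
    · exact absurd (tri (d 0) (d 1) (d 2) (-2) (-2) 0 1 (-1) (-2) 0 2 0 (-8) Hi Hi1 Hj1 (by norm_num) hu8.neg) hd
    · exact absurd (tri (d 0) (d 1) (d 2) 1 (-1) (-2) 0 2 0 0 1 (-1) (-2) Hi1 Hj Hj1 (by norm_num) hu2.neg) hd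
    · exact absurd (tri (d 0) (d 1) (d 2) (-2) (-2) 0 0 1 (-1) 2 (-1) 2 2 Hi Hj Hj1 (by norm_num) hu2) hd
    · exact absurd (tri (d 0) (d 1) (d 2) (-2) (-2) 0 1 (-1) (-2) (-2) 1 2 (-4) Hi Hi1 Hj1 (by norm_num) hu4.neg) hd
    · exact absurd (tri (d 0) (d 1) (d 2) 1 (-1) (-2) (-2) 1 2 2 0 (-2) 2 Hi1 Hj Hj1 (by norm_num) hu2) hd
    · exact absurd (tri (d 0) (d 1) (d 2) 1 (-1) (-2) 2 0 (-2) 1 0 (-2) (-2) Hi Hj Hj1 (by norm_num) hu2.neg) hd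
    · exact absurd (tri (d 0) (d 1) (d 2) 1 (-1) (-2) 1 0 (-2) (-2) (-2) 0 (-4) Hi Hj Hj1 (by norm_num) hu4.neg) hd
    · exact absurd (tri (d 0) (d 1) (d 2) 1 (-1) (-2) 0 2 0 (-2) (-2) 0 (-8) Hi Hi1 Hj (by norm_num) hu8.neg) hd
    · rfl
    · exact absurd (tri (d 0) (d 1) (d 2) 1 (-1) (-2) 0 2 0 0 1 (-1) (-2) Hi Hi1 Hj1 (by norm_num) hu2.neg) hd
    · exact absurd (tri (d 0) (d 1) (d 2) 1 (-1) (-2) 0 2 0 0 1 (-1) (-2) Hi Hi1 Hj (by norm_num) hu2.neg) hd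
    · exact absurd (tri (d 0) (d 1) (d 2) 1 (-1) (-2) 0 2 0 (-2) 1 2 (-4) Hi Hi1 Hj1 (by norm_num) hu4.neg) hd
    · exact absurd (tri (d 0) (d 1) (d 2) 1 (-1) (-2) (-2) 1 2 2 0 (-2) 2 Hi Hj Hj1 (by norm_num) hu2) hd
    · exact absurd (tri (d 0) (d 1) (d 2) 0 2 0 0 1 (-1) 1 0 (-2) (-2) Hi Hi1 Hj1 (by norm_num) hu2.neg) hd
    · exact absurd (tri (d 0) (d 1) (d 2) 0 2 0 0 1 (-1) 1 0 (-2) (-2) Hi Hi1 Hj (by norm_num) hu2.neg) hd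
    · exact absurd (tri (d 0) (d 1) (d 2) 0 2 0 0 1 (-1) 1 (-1) (-2) (-2) Hi Hi1 Hj1 (by norm_num) hu2.neg) hd
    · exact absurd (tri (d 0) (d 1) (d 2) 0 2 0 0 1 (-1) 1 (-1) (-2) (-2) Hi Hi1 Hj (by norm_num) hu2.neg) hd
    · rfl
    · exact absurd (tri (d 0) (d 1) (d 2) 0 2 0 0 1 (-1) 2 (-1) 2 (-4) Hi Hi1 Hj1 (by norm_num) hu4.neg) hd
    · exact absurd (tri (d 0) (d 1) (d 2) 0 2 0 0 1 (-1) 2 (-1) 2 (-4) Hi Hi1 Hj (by norm_num) hu4.neg) hd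
    · exact absurd (tri (d 0) (d 1) (d 2) 0 1 (-1) (-2) 1 2 2 0 (-2) 2 Hi1 Hj Hj1 (by norm_num) hu2) hd
    · exact absurd (tri (d 0) (d 1) (d 2) 0 1 (-1) 2 0 (-2) 1 0 (-2) 2 Hi Hj Hj1 (by norm_num) hu2) hd
    · exact absurd (tri (d 0) (d 1) (d 2) 0 1 (-1) 2 (-1) 2 (-2) (-2) 0 2 Hi Hi1 Hj1 (by norm_num) hu2) hd
    · exact absurd (tri (d 0) (d 1) (d 2) 0 1 (-1) 2 (-1) 2 (-2) (-2) 0 2 Hi Hi1 Hj (by norm_num) hu2) hd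
    · exact absurd (tri (d 0) (d 1) (d 2) 0 1 (-1) 1 (-1) (-2) 0 2 0 (-2) Hi Hj Hj1 (by norm_num) hu2.neg) hd
    · exact absurd (tri (d 0) (d 1) (d 2) 0 1 (-1) 2 (-1) 2 0 2 0 (-4) Hi Hi1 Hj (by norm_num) hu4.neg) hd
    · rfl
    · exact absurd (tri (d 0) (d 1) (d 2) 0 1 (-1) 2 (-1) 2 (-2) 1 2 (-8) Hi Hi1 Hj1 (by norm_num) hu8.neg) hd
    · exact absurd (tri (d 0) (d 1) (d 2) 0 1 (-1) (-2) 1 2 2 0 (-2) 2 Hi Hj Hj1 (by norm_num) hu2) hd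
    · exact absurd (tri (d 0) (d 1) (d 2) 2 (-1) 2 2 0 (-2) 1 0 (-2) (-2) Hi Hj Hj1 (by norm_num) hu2.neg) hd
    · exact absurd (tri (d 0) (d 1) (d 2) 2 (-1) 2 (-2) 1 2 1 0 (-2) (-4) Hi Hi1 Hj (by norm_num) hu4.neg) hd
    · exact absurd (tri (d 0) (d 1) (d 2) 2 (-1) 2 (-2) 1 2 1 (-1) (-2) 4 Hi Hi1 Hj1 (by norm_num) hu4) hd
    · exact absurd (tri (d 0) (d 1) (d 2) 2 (-1) 2 (-2) 1 2 1 (-1) (-2) 4 Hi Hi1 Hj (by norm_num) hu4) hd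
    · exact absurd (tri (d 0) (d 1) (d 2) 2 (-1) 2 0 2 0 0 1 (-1) (-4) Hi Hj Hj1 (by norm_num) hu4.neg) hd
    · exact absurd (tri (d 0) (d 1) (d 2) 2 (-1) 2 (-2) 1 2 0 1 (-1) (-8) Hi Hi1 Hj (by norm_num) hu8.neg) hd
    · rfl
    · exact absurd (tri (d 0) (d 1) (d 2) 2 (-1) 2 (-2) 1 2 2 0 (-2) (-8) Hi Hi1 Hj1 (by norm_num) hu8.neg) hd
    · exact absurd (tri (d 0) (d 1) (d 2) (-2) 1 2 2 0 (-2) 1 0 (-2) 2 Hi Hi1 Hj1 (by norm_num) hu2) hd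
    · exact absurd (tri (d 0) (d 1) (d 2) (-2) 1 2 2 0 (-2) 1 0 (-2) 2 Hi Hi1 Hj (by norm_num) hu2) hd
    · exact absurd (tri (d 0) (d 1) (d 2) (-2) 1 2 2 0 (-2) 1 (-1) (-2) 2 Hi Hi1 Hj1 (by norm_num) hu2) hd
    · exact absurd (tri (d 0) (d 1) (d 2) (-2) 1 2 2 0 (-2) 1 (-1) (-2) 2 Hi Hi1 Hj (by norm_num) hu2) hd
    · exact absurd (tri (d 0) (d 1) (d 2) (-2) 1 2 2 0 (-2) 0 1 (-1) 2 Hi Hi1 Hj1 (by norm_num) hu2) hd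
    · exact absurd (tri (d 0) (d 1) (d 2) (-2) 1 2 2 0 (-2) 0 1 (-1) 2 Hi Hi1 Hj (by norm_num) hu2) hd
    · exact absurd (tri (d 0) (d 1) (d 2) (-2) 1 2 2 0 (-2) 2 (-1) 2 (-8) Hi Hi1 Hj (by norm_num) hu8.neg) hd
    · rfl

  · -- different binary coset, e 0 = 0 : binary zero set is good
    exact Lb e hne he0 i j ⟨hbi, hbi1, hbj, hbj1⟩
  · -- e 0 = 1
    by_contra hne
    by_cases hE : e = ![1,0,0]
    · subst hE
      rcases Lb'' i j hne ⟨hbi, hbi1, hbj, hbj1⟩ with ⟨rfl, rfl⟩ | ⟨rfl, rfl⟩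
      · have E1 : d 0 * 2 + d 1 * 0 + d 2 * (-2) + s * 1 = 0 := hpj1
        have E2 : d 0 * 0 + d 1 * 2 + d 2 * 0 + s * 0 = 0 := hpi
        have E3 : d 0 * (-2) + d 1 * 1 + d 2 * 2 + s * 0 = 0 := hpj
        have hss : s * 2 = 0 := by linear_combination 2*E1 - E2 + 2*E3
        rcases hs with rfl | rfl
        · exact two_ne (by linear_combination hss)
        · exact two_ne (by linear_combination -hss)
      · have E1 : d 0 * 2 + d 1 * 0 + d 2 * (-2) + s * 1 = 0 := hpi1
        have E2 : d 0 * 0 + d 1 * 2 + d 2 * 0 + s * 0 = 0 := hpj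
        have E3 : d 0 * (-2) + d 1 * 1 + d 2 * 2 + s * 0 = 0 := hpi
        have hss : s * 2 = 0 := by linear_combination 2*E1 - E2 + 2*E3
        rcases hs with rfl | rfl
        · exact two_ne (by linear_combination hss)
        · exact two_ne (by linear_combination -hss)
    · exact Lb' e he0 hE i j hne ⟨hbi, hbi1, hbj, hbj1⟩

lemma pair_lower {σ' : Type} (u v : ZMod 8 → σ')
    (h : {i : ZMod 8 | (u i, u (i+1)) = (v i, v (i+1))}.Subsingleton) :
    7 ≤ pairDist u v := by
  classical
  set A := {i : ZMod 8 | (u i, u (i+1)) = (v i, v (i+1))} with hA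
  have h1 : A.ncard ≤ 1 := by
    rcases A.eq_empty_or_nonempty with hE | ⟨a, ha⟩
    · simp [hE]
    · have hsub : A ⊆ {a} := fun b hb => h hb ha
      calc A.ncard ≤ ({a} : Set (ZMod 8)).ncard := Set.ncard_le_ncard hsub (Set.toFinite _)
        _ = 1 := Set.ncard_singleton a
  have h2 : A.ncard + Aᶜ.ncard = 8 := by
    have := Set.ncard_add_ncard_compl A (Set.toFinite A)
    simpa [Nat.card_zmod] using this
  have h3 : pairDist u v = Aᶜ.ncard := rfl
  omega

lemma pair_exact {σ' : Type} (u v : ZMod 8 → σ')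
    (h : {i : ZMod 8 | (u i, u (i+1)) = (v i, v (i+1))} = {0}) :
    pairDist u v = 7 := by
  classical
  have h3 : pairDist u v = (({0} : Set (ZMod 8))ᶜ).ncard := by
    show ({i : ZMod 8 | (u i, u (i+1)) ≠ (v i, v (i+1))}).ncard = _
    rw [show {i : ZMod 8 | (u i, u (i+1)) ≠ (v i, v (i+1))}
        = ({i : ZMod 8 | (u i, u (i+1)) = (v i, v (i+1))})ᶜ from rfl, h]
  have h2 := Set.ncard_add_ncard_compl ({0} : Set (ZMod 8)) (Set.toFinite _)
  rw [Set.ncard_singleton, Nat.card_zmod] at h2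
  omega

/-- existence of an MDS (8,7)_{2p} symbol-pair code for every odd
prime p. -/
theorem stmt_17 (p : ℕ) (hp : p.Prime) (hodd : Odd p) :
    ∃ (σ : Type) (C : Set (ZMod 8 → σ)), Nat.card σ = 2 * p ∧
      IsLeast {e | ∃ u ∈ C, ∃ v ∈ C, u ≠ v ∧ pairDist u v = e} 7 ∧
      C.ncard = (2 * p) ^ 3 := by
  classical
  have hp2 : p ≠ 2 := by rintro rfl; exact (by decide : ¬ Odd 2) hodd
  haveI : Fact p.Prime := ⟨hp⟩
  have two_ne : (2 : ZMod p) ≠ 0 := by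
    intro h
    have h2 : ((2:ℕ) : ZMod p) = 0 := by exact_mod_cast h
    have := (ZMod.natCast_eq_zero_iff 2 p).mp h2
    exact hp2 ((Nat.prime_dvd_prime_iff_eq hp Nat.prime_two).mp this)
  have hu2 : IsUnit (2 : ZMod p) := isUnit_iff_ne_zero.mpr two_ne
  have four_ne : (4 : ZMod p) ≠ 0 := by
    have h := hu2.mul hu2; norm_num at h; exact h
  have ntwo_ne : (-2 : ZMod p) ≠ 0 := by simpa using two_ne
  have nfour_ne : (-4 : ZMod p) ≠ 0 := by simpa using four_ne
  have hu4 : IsUnit (4 : ZMod p) := isUnit_iff_ne_zero.mpr four_ne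
  refine ⟨ZMod 2 × ZMod p, Set.range (Fenc p), ?_, ?_, ?_⟩
  · simp [Nat.card_prod, Nat.card_zmod]
  · constructor
    · -- 7 is attained
      set w : Fin 3 → ZMod p := ![0, 2, 0] with hw
      set u : ZMod 8 → ZMod 2 × ZMod p := Fenc p (0, w) with hu
      set v : ZMod 8 → ZMod 2 × ZMod p := Fenc p (0, 0) with hv
      have hval : ∀ k : ZMod 8, u k = (0, phip p w k) := by
        intro k
        show (psib 0 k, phip p w k + eps p ((0 : Fin 3 → ZMod 2) 0) * alp p k) = _
        have hz : psib 0 k = 0 := by simp [psib]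
        simp [hz, eps]
      have hval' : ∀ k : ZMod 8, v k = (0, (0 : ZMod p)) := by
        intro k
        show (psib 0 k, phip p 0 k + eps p ((0 : Fin 3 → ZMod 2) 0) * alp p k) = _
        have hz : psib 0 k = 0 := by simp [psib]
        have hz2 : phip p (0 : Fin 3 → ZMod p) k = 0 := by simp [phip]
        simp [hz, hz2, eps]
      have huk : ∀ k : ZMod 8, u k = v k ↔ phip p w k = 0 := by
        intro k; rw [hval, hval']; simp [Prod.mk.injEq]

      have V0 : phip p w 0 = 0 := by
        show (0:ZMod p) * 2 + 2 * 0 + 0 * (-2) = 0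
        norm_num
      have V1 : phip p w 1 = 0 := by
        show (0:ZMod p) * 1 + 2 * 0 + 0 * (-2) = 0
        norm_num
      have V2 : phip p w 2 = (-4) := by
        show (0:ZMod p) * (-2) + 2 * (-2) + 0 * 0 = (-4)
        norm_num
      have V3 : phip p w 3 = (-2) := by
        show (0:ZMod p) * 1 + 2 * (-1) + 0 * (-2) = (-2)
        norm_num
      have V4 : phip p w 4 = 4 := by
        show (0:ZMod p) * 0 + 2 * 2 + 0 * 0 = 4
        norm_num
      have V5 : phip p w 5 = 2 := by
        show (0:ZMod p) * 0 + 2 * 1 + 0 * (-1) = 2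
        norm_num
      have V6 : phip p w 6 = (-2) := by
        show (0:ZMod p) * 2 + 2 * (-1) + 0 * 2 = (-2)
        norm_num
      have V7 : phip p w 7 = 2 := by
        show (0:ZMod p) * (-2) + 2 * 1 + 0 * 2 = 2
        norm_num
      have W0 : phip p w (0+1) = 0 := V1
      have W1 : phip p w (1+1) = (-4) := V2
      have W2 : phip p w (2+1) = (-2) := V3
      have W3 : phip p w (3+1) = 4 := V4
      have W4 : phip p w (4+1) = 2 := V5
      have W5 : phip p w (5+1) = (-2) := V6
      have W6 : phip p w (6+1) = 2 := V7
      have W7 : phip p w (7+1) = 0 := V0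
      have hAset : {i : ZMod 8 | (u i, u (i+1)) = (v i, v (i+1))} = {0} := by
        ext i
        simp only [Set.mem_setOf_eq, Set.mem_singleton_iff]
        constructor
        · intro hi
          rcases zmod8cases i with rfl|rfl|rfl|rfl|rfl|rfl|rfl|rfl
          · rfl
          · exact absurd (W1 ▸ (huk _).mp (congrArg Prod.snd hi)) nfour_ne
          · exact absurd (V2 ▸ (huk _).mp (congrArg Prod.fst hi)) nfour_ne
          · exact absurd (V3 ▸ (huk _).mp (congrArg Prod.fst hi)) ntwo_ne
          · exact absurd (V4 ▸ (huk _).mp (congrArg Prod.fst hi)) four_ne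
          · exact absurd (V5 ▸ (huk _).mp (congrArg Prod.fst hi)) two_ne
          · exact absurd (V6 ▸ (huk _).mp (congrArg Prod.fst hi)) ntwo_ne
          · exact absurd (V7 ▸ (huk _).mp (congrArg Prod.fst hi)) two_ne
        · rintro rfl
          have e1 : u 0 = v 0 := (huk 0).mpr V0
          have e2 : u (0+1) = v (0+1) := (huk (0+1)).mpr W0
          rw [e1, e2]
      refine ⟨u, ⟨(0, w), rfl⟩, v, ⟨(0, 0), rfl⟩, ?_, pair_exact u v hAset⟩
      intro h
      have : u 2 = v 2 := congrFun h 2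
      exact absurd (V2 ▸ (huk 2).mp this) nfour_ne
    · -- 7 is a lower bound
      rintro q ⟨u, ⟨⟨t, x⟩, rfl⟩, v, ⟨⟨t', x'⟩, rfl⟩, huv, rfl⟩
      apply pair_lower
      intro i hi j hj
      simp only [Set.mem_setOf_eq] at hi hj
      -- extract componentwise conditions
      have comp : ∀ k : ZMod 8, Fenc p (t, x) k = Fenc p (t', x') k →
          psib (t - t') k = 0 ∧
            phip p (x - x') k + (eps p (t 0) - eps p (t' 0)) * alp p k = 0 := by
        intro k hk
        have hb : psib t k = psib t' k := congrArg Prod.fst hk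
        have hpp : phip p x k + eps p (t 0) * alp p k
            = phip p x' k + eps p (t' 0) * alp p k := congrArg Prod.snd hk
        constructor
        · rw [← psib_sub, hb, sub_self]
        · have hsub := phip_sub p x x' k
          linear_combination hpp - hsub
      obtain ⟨b1, p1⟩ := comp i (congrArg Prod.fst hi)
      obtain ⟨b2, p2⟩ := comp (i+1) (congrArg Prod.snd hi)
      obtain ⟨b3, p3⟩ := comp j (congrArg Prod.fst hj)
      obtain ⟨b4, p4⟩ := comp (j+1) (congrArg Prod.snd hj)
      apply mainlem p hp hodd (t - t') (x - x') (eps p (t 0) - eps p (t' 0)) ?_ i j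
        b1 p1 b2 p2 b3 p3 b4 p4
      -- establish the case trichotomy
      rcases eq_or_ne t t' with rfl | htt
      · left
        refine ⟨sub_self t, sub_self _, ?_⟩
        have hxx : x ≠ x' := by rintro rfl; exact huv rfl
        rintro ⟨z0, z1, z2⟩
        apply hxx
        funext k
        have : (x - x') k = 0 := by
          fin_cases k <;> assumption
        simpa [sub_eq_zero] using this
      · have hee : t - t' ≠ 0 := sub_ne_zero_of_ne htt
        rcases zmod2cases (t 0) with h0 | h0 <;> rcases zmod2cases (t' 0) with h1 | h1
        · right; left
          exact ⟨hee, by simp [Pi.sub_apply, h0, h1]⟩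
        · right; right
          constructor
          · simp [Pi.sub_apply, h0, h1]
          · right; simp [eps, h0, h1]
        · right; right
          constructor
          · simp [Pi.sub_apply, h0, h1]
          · left; simp [eps, h0, h1]
        · right; left
          exact ⟨hee, by simp [Pi.sub_apply, h0, h1]⟩
  · -- cardinality
    have hinj : Function.Injective (Fenc p) := by
      rintro ⟨t, x⟩ ⟨t', x'⟩ h
      have hb : ∀ k, psib t k = psib t' k := fun k => congrArg Prod.fst (congrFun h k)
      have ht : t = t' := by
        have : t - t' = 0 := Linjb _ (fun k => by rw [← psib_sub, hb, sub_self])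
        ext k; simpa [sub_eq_zero] using congrFun this k
      subst ht
      have hφ : ∀ k, phip p x k = phip p x' k := by
        intro k
        have := congrArg Prod.snd (congrFun h k)
        exact add_right_cancel this
      have hd : ∀ k : ZMod 8, phip p (x - x') k = 0 := by
        intro k; rw [← phip_sub, hφ, sub_self]
      obtain ⟨z0, z1, z2⟩ := tri ((x - x') 0) ((x - x') 1) ((x - x') 2)
        2 0 (-2) 1 0 (-2) (-2) (-2) 0 (-4) (hd 0) (hd 1) (hd 2) (by norm_num) hu4.neg
      have hx : x = x' := by
        funext k
        have : (x - x') k = 0 := by fin_cases k <;> assumption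
        simpa [sub_eq_zero] using this
      simp [hx]
    have h1 : (Set.range (Fenc p)).ncard = Nat.card ((Fin 3 → ZMod 2) × (Fin 3 → ZMod p)) := by
      rw [← Nat.card_coe_set_eq]
      exact Nat.card_range_of_injective hinj
    rw [h1, Nat.card_prod, Nat.card_pi, Nat.card_pi]
    simp only [Nat.card_zmod, Finset.prod_const, Finset.card_univ, Fintype.card_fin]
    ring
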